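/- For every ε > 0 there exist constants β > 0 and c_ε > 0 (independent of n) such that for every n ≥ 1 there are a probability space (T, m), a measurable function φ : T → M_n with the n² functions { √n φ(·)_{ij} : 1 ≤ i, j ≤ n } orthonormal in L²(T, m) and β-subgaussian, and a matrix a ∈ M_n with tr|a| ≥ n (1+ε)^{-1} and ess sup_{t ∈ T} |tr(a φ(t))| ≤ c_ε. Consequently, the smallest constant C'_n such that tr|a| ≤ C'_n sup_t |tr(a φ(t))| for all a ∈ M_n satisfies C'_n ≥ n (1+ε)^{-1} c_ε^{-1}, so the trivial upper bound C'_n ≤ n is asymptotically optimal. -/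

import Mathlib

open MeasureTheory ComplexConjugate ENNReal Matrix ComplexOrder

/-- The positive semidefinite square root of a positive semidefinite matrix (the definition
`Matrix.PosSemidef.sqrt` of the older Mathlib, removed since). -/
noncomputable def Matrix.PosSemidef.sqrt {n : Type*} [Fintype n] [DecidableEq n] {𝕜 : Type*}
    [RCLike 𝕜] {A : Matrix n n 𝕜} (hA : A.PosSemidef) : Matrix n n 𝕜 :=
  hA.1.eigenvectorUnitary.1 * diagonal ((↑) ∘ Real.sqrt ∘ hA.1.eigenvalues) *
    (star hA.1.eigenvectorUnitary : Matrix n n 𝕜)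

noncomputable section

namespace MatrixSidonAux

/-- sign function on `Bool` -/
def sg (b : Bool) : ℝ := if b then 1 else -1

@[simp] lemma sg_true : sg true = 1 := rfl
@[simp] lemma sg_false : sg false = -1 := rfl

lemma sg_mul_self (b : Bool) : sg b * sg b = 1 := by cases b <;> simp [sg]

@[simp] lemma sg_not (b : Bool) : sg (!b) = -sg b := by cases b <;> simp [sg]

@[simp] lemma norm_sg (b : Bool) : ‖(sg b : ℂ)‖ = 1 := by cases b <;> simp [sg]

variable {ι : Type} [Fintype ι] [DecidableEq ι]

lemma card_pos : (0:ℝ) < (Fintype.card (ι → Bool) : ℝ) := by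
  exact_mod_cast Fintype.card_pos

lemma sum_pi_bool (f : ι → Bool → ℝ) :
    ∑ t : ι → Bool, ∏ i, f i (t i) = ∏ i, (f i true + f i false) := by
  classical
  have h : ∏ i, ∑ b ∈ (Finset.univ : Finset Bool), f i b
      = ∑ t ∈ Fintype.piFinset fun _ : ι => (Finset.univ : Finset Bool), ∏ i, f i (t i) :=
    Finset.prod_univ_sum _ _
  simp only [Fintype.piFinset_univ] at h
  rw [← h]
  exact Finset.prod_congr rfl fun i _ => by simp

lemma sum_sg_orth (p q : ι) :
    ∑ t : ι → Bool, sg (t p) * sg (t q)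
      = if p = q then (Fintype.card (ι → Bool) : ℝ) else 0 := by
  classical
  rcases eq_or_ne p q with rfl | hpq
  · simp [sg_mul_self, Finset.card_univ]
  · rw [if_neg hpq]
    have hinv : Function.Involutive (fun t : ι → Bool => Function.update t p (!(t p))) := by
      intro t; funext i
      rcases eq_or_ne i p with rfl | h
      · simp
      · simp [Function.update_of_ne h]
    set e : Equiv.Perm (ι → Bool) := hinv.toPerm _ with he
    have h1 : ∑ t : ι → Bool, sg (t p) * sg (t q)
        = ∑ t : ι → Bool, sg ((e t) p) * sg ((e t) q) :=
      (Equiv.sum_comp e fun t => sg (t p) * sg (t q)).symm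
    have h2 : ∀ t : ι → Bool, sg ((e t) p) * sg ((e t) q) = -(sg (t p) * sg (t q)) := by
      intro t
      have hp : (e t) p = !(t p) := by simp [he, Function.Involutive.toPerm]
      have hq : (e t) q = t q := by
        simp [he, Function.Involutive.toPerm, Function.update_of_ne (Ne.symm hpq)]
      rw [hp, hq, sg_not]; ring
    have h3 : ∑ t : ι → Bool, sg (t p) * sg (t q)
        = -∑ t : ι → Bool, sg (t p) * sg (t q) := by
      calc ∑ t : ι → Bool, sg (t p) * sg (t q)
          = ∑ t : ι → Bool, sg (e t p) * sg (e t q) := h1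
        _ = ∑ t : ι → Bool, -(sg (t p) * sg (t q)) :=
            Finset.sum_congr rfl fun t _ => h2 t
        _ = -∑ t : ι → Bool, sg (t p) * sg (t q) := by simp
    linarith

lemma sum_exp_sg_le (c : ι → ℝ) :
    ∑ t : ι → Bool, Real.exp (∑ i, c i * sg (t i))
      ≤ (Fintype.card (ι → Bool) : ℝ) * Real.exp ((∑ i, c i ^ 2) / 2) := by
  have h1 : ∑ t : ι → Bool, Real.exp (∑ i, c i * sg (t i))
      = ∏ i, (Real.exp (c i) + Real.exp (-c i)) := by
    calc ∑ t : ι → Bool, Real.exp (∑ i, c i * sg (t i))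
        = ∑ t : ι → Bool, ∏ i, Real.exp (c i * sg (t i)) := by
          refine Finset.sum_congr rfl fun t _ => ?_
          rw [Real.exp_sum]
      _ = ∏ i, (Real.exp (c i * sg true) + Real.exp (c i * sg false)) :=
          sum_pi_bool fun i b => Real.exp (c i * sg b)
      _ = ∏ i, (Real.exp (c i) + Real.exp (-c i)) := by
          refine Finset.prod_congr rfl fun i _ => by simp
  rw [h1]
  have h2 : ∀ i : ι, Real.exp (c i) + Real.exp (-c i) ≤ 2 * Real.exp (c i ^ 2 / 2) := by
    intro i
    have h := Real.cosh_le_exp_half_sq (c i)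
    rw [Real.cosh_eq] at h
    linarith
  calc ∏ i, (Real.exp (c i) + Real.exp (-c i))
      ≤ ∏ i, 2 * Real.exp (c i ^ 2 / 2) :=
        Finset.prod_le_prod (fun i _ => by positivity) fun i _ => h2 i
    _ = (Fintype.card (ι → Bool) : ℝ) * Real.exp ((∑ i, c i ^ 2) / 2) := by
        rw [Finset.prod_mul_distrib, ← Real.exp_sum, Finset.prod_const, Finset.card_univ]
        rw [Fintype.card_fun]
        congr 1
        · push_cast; simp [Fintype.card_bool]
        · rw [Finset.sum_div]


open Real in
lemma integrable_exp_quad (b : ℝ) :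
    Integrable (fun s : ℝ => Real.exp (-(s ^ 2) + b * s)) := by
  have h : (fun s : ℝ => Real.exp (-(s ^ 2) + b * s))
      = fun s : ℝ => Real.exp (b ^ 2 / 4) * Real.exp (-1 * (s - b / 2) ^ 2) := by
    funext s
    rw [← Real.exp_add]
    congr 1
    ring
  rw [h]
  exact ((integrable_exp_neg_mul_sq one_pos).comp_sub_right (b / 2)).const_mul _

open Real in
lemma integral_exp_quad (b : ℝ) :
    ∫ s : ℝ, Real.exp (-(s ^ 2) + b * s) = Real.sqrt π * Real.exp (b ^ 2 / 4) := by
  have h : (fun s : ℝ => Real.exp (-(s ^ 2) + b * s))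
      = fun s : ℝ => Real.exp (b ^ 2 / 4) * Real.exp (-1 * (s - b / 2) ^ 2) := by
    funext s
    rw [← Real.exp_add]
    congr 1
    ring
  rw [h, MeasureTheory.integral_const_mul,
    integral_sub_right_eq_self (fun s : ℝ => Real.exp (-1 * s ^ 2)) (b / 2),
    integral_gaussian]
  rw [div_one]
  ring

lemma key_real (c : ι → ℝ) (hc : ∑ i, c i ^ 2 ≤ 1) :
    (Fintype.card (ι → Bool) : ℝ)⁻¹ *
        ∑ t : ι → Bool, Real.exp ((∑ i, c i * sg (t i)) ^ 2 / 8)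
      ≤ 2 / Real.sqrt 3 := by
  classical
  set N := (Fintype.card (ι → Bool) : ℝ) with hN
  have hN0 : 0 < N := card_pos
  have hpi : (0:ℝ) < Real.sqrt Real.pi := Real.sqrt_pos.mpr Real.pi_pos
  have hpt : ∀ a : ℝ, Real.exp (a ^ 2 / 8)
      = (Real.sqrt Real.pi)⁻¹ * ∫ s : ℝ, Real.exp (-(s ^ 2) + (a / Real.sqrt 2) * s) := by
    intro a
    rw [integral_exp_quad]
    have h2 : (a / Real.sqrt 2) ^ 2 / 4 = a ^ 2 / 8 := by
      rw [div_pow, Real.sq_sqrt (by norm_num : (0:ℝ) ≤ 2)]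
      ring
    rw [h2, ← mul_assoc, inv_mul_cancel₀ (ne_of_gt hpi), one_mul]
  have hswap : ∑ t : ι → Bool, Real.exp ((∑ i, c i * sg (t i)) ^ 2 / 8)
      = (Real.sqrt Real.pi)⁻¹ *
          ∫ s : ℝ, ∑ t : ι → Bool,
            Real.exp (-(s ^ 2) + ((∑ i, c i * sg (t i)) / Real.sqrt 2) * s) := by
    rw [MeasureTheory.integral_finset_sum _ fun t _ => integrable_exp_quad _, Finset.mul_sum]
    exact Finset.sum_congr rfl fun t _ => hpt _
  have hbd : ∀ s : ℝ,
      ∑ t : ι → Bool, Real.exp (-(s ^ 2) + ((∑ i, c i * sg (t i)) / Real.sqrt 2) * s)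
        ≤ N * Real.exp (-(3 / 4) * s ^ 2) := by
    intro s
    have h1 : ∀ t : ι → Bool, -(s ^ 2) + ((∑ i, c i * sg (t i)) / Real.sqrt 2) * s
        = -(s ^ 2) + ∑ i, (s / Real.sqrt 2 * c i) * sg (t i) := by
      intro t
      congr 1
      rw [Finset.sum_div, Finset.sum_mul]
      refine Finset.sum_congr rfl fun i _ => by ring
    have h2 : ∑ i, (s / Real.sqrt 2 * c i) ^ 2 = s ^ 2 / 2 * ∑ i, c i ^ 2 := by
      simp_rw [mul_pow]
      rw [← Finset.mul_sum, div_pow, Real.sq_sqrt (by norm_num : (0:ℝ) ≤ 2)]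
    calc ∑ t : ι → Bool, Real.exp (-(s ^ 2) + ((∑ i, c i * sg (t i)) / Real.sqrt 2) * s)
        = ∑ t : ι → Bool, Real.exp (-(s ^ 2))
            * Real.exp (∑ i, (s / Real.sqrt 2 * c i) * sg (t i)) := by
          refine Finset.sum_congr rfl fun t _ => ?_
          rw [h1 t, Real.exp_add]
      _ = Real.exp (-(s ^ 2)) * ∑ t : ι → Bool,
            Real.exp (∑ i, (s / Real.sqrt 2 * c i) * sg (t i)) := by
          rw [Finset.mul_sum]
      _ ≤ Real.exp (-(s ^ 2)) * (N * Real.exp ((∑ i, (s / Real.sqrt 2 * c i) ^ 2) / 2)) := by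
          have := sum_exp_sg_le fun i => s / Real.sqrt 2 * c i
          exact mul_le_mul_of_nonneg_left this (Real.exp_nonneg _)
      _ ≤ N * Real.exp (-(3 / 4) * s ^ 2) := by
          rw [← mul_assoc, mul_comm (Real.exp (-(s ^ 2))) N, mul_assoc, ← Real.exp_add]
          refine mul_le_mul_of_nonneg_left (Real.exp_le_exp.mpr ?_) hN0.le
          rw [h2]
          nlinarith [sq_nonneg s]
  have hint : (∫ s : ℝ, ∑ t : ι → Bool,
        Real.exp (-(s ^ 2) + ((∑ i, c i * sg (t i)) / Real.sqrt 2) * s))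
      ≤ ∫ s : ℝ, N * Real.exp (-(3 / 4) * s ^ 2) := by
    refine MeasureTheory.integral_mono
      (MeasureTheory.integrable_finset_sum _ fun t _ => integrable_exp_quad _)
      ((integrable_exp_neg_mul_sq (by norm_num : (0:ℝ) < 3/4)).const_mul N) hbd
  have hval : ∫ s : ℝ, N * Real.exp (-(3 / 4) * s ^ 2)
      = N * Real.sqrt (Real.pi / (3 / 4)) := by
    rw [MeasureTheory.integral_const_mul, integral_gaussian]
  have hfin : (Real.sqrt Real.pi)⁻¹ * Real.sqrt (Real.pi / (3 / 4)) = 2 / Real.sqrt 3 := by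
    rw [show Real.pi / (3 / 4) = Real.pi * (4 / 3) by ring,
      Real.sqrt_mul Real.pi_pos.le, inv_mul_cancel_left₀ (ne_of_gt hpi)]
    rw [show (4:ℝ)/3 = 4/3 by ring]
    rw [show (4:ℝ)/3 = (2 / Real.sqrt 3) ^ 2 by
      rw [div_pow, Real.sq_sqrt (by norm_num : (0:ℝ) ≤ 3)]; norm_num]
    exact Real.sqrt_sq (by positivity)
  calc N⁻¹ * ∑ t : ι → Bool, Real.exp ((∑ i, c i * sg (t i)) ^ 2 / 8)
      = N⁻¹ * ((Real.sqrt Real.pi)⁻¹ * ∫ s : ℝ, ∑ t : ι → Bool,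
          Real.exp (-(s ^ 2) + ((∑ i, c i * sg (t i)) / Real.sqrt 2) * s)) := by rw [hswap]
    _ ≤ N⁻¹ * ((Real.sqrt Real.pi)⁻¹ * (N * Real.sqrt (Real.pi / (3 / 4)))) := by
        refine mul_le_mul_of_nonneg_left ?_ (by positivity)
        refine mul_le_mul_of_nonneg_left ?_ (by positivity)
        rw [← hval]; exact hint
    _ = (Real.sqrt Real.pi)⁻¹ * Real.sqrt (Real.pi / (3 / 4)) := by
        field_simp
    _ = 2 / Real.sqrt 3 := hfin


lemma norm_sq_re_im (z : ℂ) : ‖z‖ ^ 2 = z.re ^ 2 + z.im ^ 2 := by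
  rw [Complex.sq_norm, Complex.normSq_apply]
  ring

lemma key_complex (y : ι → ℂ) (hy : ∑ i, ‖y i‖ ^ 2 ≤ 1) :
    (Fintype.card (ι → Bool) : ℝ)⁻¹ *
        ∑ t : ι → Bool, Real.exp (‖∑ i, y i * (sg (t i) : ℂ)‖ ^ 2 / 16)
      ≤ 2 / Real.sqrt 3 := by
  classical
  set N := (Fintype.card (ι → Bool) : ℝ) with hN
  have hN0 : 0 < N := card_pos
  set u : (ι → Bool) → ℝ := fun t => ∑ i, (y i).re * sg (t i) with hu
  set v : (ι → Bool) → ℝ := fun t => ∑ i, (y i).im * sg (t i) with hv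
  have hsplit : ∀ t : ι → Bool, ‖∑ i, y i * (sg (t i) : ℂ)‖ ^ 2 = u t ^ 2 + v t ^ 2 := by
    intro t
    rw [norm_sq_re_im]
    congr 1
    · rw [hu, Complex.re_sum]
      refine congrArg (· ^ 2) (Finset.sum_congr rfl fun i _ => ?_)
      simp [Complex.mul_re]
    · rw [hv, Complex.im_sum]
      refine congrArg (· ^ 2) (Finset.sum_congr rfl fun i _ => ?_)
      simp [Complex.mul_im]
  have hre : ∑ i, (y i).re ^ 2 ≤ 1 := by
    refine le_trans (Finset.sum_le_sum fun i _ => ?_) hy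
    rw [norm_sq_re_im]
    nlinarith [sq_nonneg (y i).im]
  have him : ∑ i, (y i).im ^ 2 ≤ 1 := by
    refine le_trans (Finset.sum_le_sum fun i _ => ?_) hy
    rw [norm_sq_re_im]
    nlinarith [sq_nonneg (y i).re]
  have hCS : (∑ t : ι → Bool, N⁻¹ * (Real.exp (u t ^ 2 / 16) * Real.exp (v t ^ 2 / 16))) ^ 2
      ≤ (∑ t : ι → Bool, N⁻¹ * Real.exp (u t ^ 2 / 8))
        * ∑ t : ι → Bool, N⁻¹ * Real.exp (v t ^ 2 / 8) := by
    have h := Finset.sum_mul_sq_le_sq_mul_sq Finset.univ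
      (fun t : ι → Bool => Real.sqrt N⁻¹ * Real.exp (u t ^ 2 / 16))
      (fun t : ι → Bool => Real.sqrt N⁻¹ * Real.exp (v t ^ 2 / 16))
    have e1 : ∀ t : ι → Bool,
        (Real.sqrt N⁻¹ * Real.exp (u t ^ 2 / 16)) * (Real.sqrt N⁻¹ * Real.exp (v t ^ 2 / 16))
          = N⁻¹ * (Real.exp (u t ^ 2 / 16) * Real.exp (v t ^ 2 / 16)) := by
      intro t
      rw [show (Real.sqrt N⁻¹ * Real.exp (u t ^ 2 / 16)) * (Real.sqrt N⁻¹ * Real.exp (v t ^ 2 / 16))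
          = (Real.sqrt N⁻¹ * Real.sqrt N⁻¹) * (Real.exp (u t ^ 2 / 16) * Real.exp (v t ^ 2 / 16)) by ring,
        Real.mul_self_sqrt (by positivity)]
    have e2 : ∀ (w : ℝ), (Real.sqrt N⁻¹ * Real.exp (w ^ 2 / 16)) ^ 2
        = N⁻¹ * Real.exp (w ^ 2 / 8) := by
      intro w
      rw [mul_pow, Real.sq_sqrt (by positivity), ← Real.exp_nat_mul]
      push_cast
      rw [show (2:ℝ) * (w ^ 2 / 16) = w ^ 2 / 8 by ring]
    simp_rw [e1, e2] at h
    exact h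
  have hu8 : ∑ t : ι → Bool, N⁻¹ * Real.exp (u t ^ 2 / 8) ≤ 2 / Real.sqrt 3 := by
    rw [← Finset.mul_sum]
    exact key_real _ hre
  have hv8 : ∑ t : ι → Bool, N⁻¹ * Real.exp (v t ^ 2 / 8) ≤ 2 / Real.sqrt 3 := by
    rw [← Finset.mul_sum]
    exact key_real _ him
  have hpos : (0:ℝ) ≤ ∑ t : ι → Bool, N⁻¹ * (Real.exp (u t ^ 2 / 16) * Real.exp (v t ^ 2 / 16)) := by
    positivity
  have h23 : (0:ℝ) ≤ 2 / Real.sqrt 3 := by positivity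
  have hfinal : ∑ t : ι → Bool, N⁻¹ * (Real.exp (u t ^ 2 / 16) * Real.exp (v t ^ 2 / 16))
      ≤ 2 / Real.sqrt 3 := by
    nlinarith [hCS, hu8, hv8, mul_le_mul hu8 hv8 (by positivity) h23]
  calc N⁻¹ * ∑ t : ι → Bool, Real.exp (‖∑ i, y i * (sg (t i) : ℂ)‖ ^ 2 / 16)
      = ∑ t : ι → Bool, N⁻¹ * (Real.exp (u t ^ 2 / 16) * Real.exp (v t ^ 2 / 16)) := by
        rw [Finset.mul_sum]
        refine Finset.sum_congr rfl fun t _ => ?_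
        rw [hsplit t, ← Real.exp_add]
        rw [show u t ^ 2 / 16 + v t ^ 2 / 16 = (u t ^ 2 + v t ^ 2) / 16 by ring]
    _ ≤ 2 / Real.sqrt 3 := hfinal

lemma two_div_sqrt_three_le_exp_one : 2 / Real.sqrt 3 ≤ Real.exp 1 := by
  have h1 : (1:ℝ) ≤ Real.sqrt 3 := by
    rw [show (1:ℝ) = Real.sqrt 1 by simp]
    exact Real.sqrt_le_sqrt (by norm_num)
  have h2 : 2 / Real.sqrt 3 ≤ 2 := by
    rw [div_le_iff₀ (by positivity)]
    nlinarith
  have h3 : (2:ℝ) ≤ Real.exp 1 := by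
    have := Real.add_one_le_exp (1:ℝ)
    linarith
  linarith


lemma sum_orth_pair (A B : ι → ℂ) :
    (Fintype.card (ι → Bool) : ℝ)⁻¹ •
        ∑ t : ι → Bool, ((∑ i, A i * (sg (t i) : ℂ)) * conj (∑ i, B i * (sg (t i) : ℂ)))
      = ∑ i, A i * conj (B i) := by
  classical
  set N := (Fintype.card (ι → Bool) : ℝ) with hN
  have hN0 : 0 < N := card_pos
  have hterm : ∀ t : ι → Bool,
      (∑ i, A i * (sg (t i) : ℂ)) * conj (∑ i, B i * (sg (t i) : ℂ))
        = ∑ i, ∑ j, A i * conj (B j) * ((sg (t i) * sg (t j) : ℝ) : ℂ) := by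
    intro t
    rw [map_sum, Finset.sum_mul_sum]
    refine Finset.sum_congr rfl fun i _ => Finset.sum_congr rfl fun j _ => ?_
    rw [_root_.map_mul, Complex.conj_ofReal]
    push_cast
    ring
  have hswap : ∑ t : ι → Bool,
      (∑ i, A i * (sg (t i) : ℂ)) * conj (∑ i, B i * (sg (t i) : ℂ))
        = ∑ i, ∑ j, A i * conj (B j) * ((if i = j then N else 0 : ℝ) : ℂ) := by
    rw [Finset.sum_congr rfl fun t _ => hterm t]
    rw [Finset.sum_comm]
    refine Finset.sum_congr rfl fun i _ => ?_
    rw [Finset.sum_comm]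
    refine Finset.sum_congr rfl fun j _ => ?_
    rw [← Finset.mul_sum, ← Complex.ofReal_sum, sum_sg_orth i j, hN]
  rw [hswap]
  have hcol : ∀ i : ι, ∑ j, A i * conj (B j) * ((if i = j then N else 0 : ℝ) : ℂ)
      = (N : ℂ) * (A i * conj (B i)) := by
    intro i
    rw [Finset.sum_eq_single i]
    · rw [if_pos rfl]; ring
    · intro j _ hji
      rw [if_neg (Ne.symm hji)]
      simp
    · intro h
      exact absurd (Finset.mem_univ i) h
  rw [Finset.sum_congr rfl fun i _ => hcol i, ← Finset.mul_sum]
  rw [Complex.real_smul, ← mul_assoc]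
  push_cast
  rw [inv_mul_cancel₀ (by exact_mod_cast ne_of_gt hN0), one_mul]

section unif

variable (α : Type) [Fintype α] [MeasurableSpace α] [MeasurableSingletonClass α] [Nonempty α]

/-- uniform probability measure on a finite type -/
def unif : Measure α := (Fintype.card α : ℝ≥0∞)⁻¹ • Measure.count

lemma unif_prob : IsProbabilityMeasure (unif α) := by
  constructor
  rw [unif, Measure.smul_apply, Measure.count_univ, ENat.card_eq_coe_fintype_card, ENat.toENNReal_coe, smul_eq_mul,
    ENNReal.inv_mul_cancel (by exact_mod_cast Fintype.card_ne_zero) (ENNReal.natCast_ne_top _)]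

lemma unif_integral {E : Type*} [NormedAddCommGroup E] [NormedSpace ℝ E] [CompleteSpace E] (f : α → E) :
    ∫ x, f x ∂(unif α) = (Fintype.card α : ℝ)⁻¹ • ∑ x, f x := by
  haveI := unif_prob α
  rw [MeasureTheory.integral_fintype (Integrable.of_finite)]
  have hx : ∀ x : α, ((unif α) {x}).toReal = (Fintype.card α : ℝ)⁻¹ := by
    intro x
    rw [unif, Measure.smul_apply, Measure.count_singleton, smul_eq_mul, mul_one,
      ENNReal.toReal_inv]
    simp
  rw [Finset.smul_sum]
  exact Finset.sum_congr rfl fun x _ => by rw [Measure.real, hx x]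

end unif


section dft

/-- `n`-th root of unity to power `d` -/
def om (n : ℕ) (d : ℤ) : ℂ := Complex.exp (2 * (Real.pi : ℂ) * Complex.I * d / n)

lemma om_zero (n : ℕ) : om n 0 = 1 := by simp [om]

lemma om_add (n : ℕ) (a b : ℤ) : om n (a + b) = om n a * om n b := by
  rw [om, om, om, ← Complex.exp_add]
  congr 1
  push_cast
  ring

lemma om_conj (n : ℕ) (a : ℤ) : conj (om n a) = om n (-a) := by
  rw [om, om, ← Complex.exp_conj]
  congr 1
  simp only [map_div₀, _root_.map_mul, Complex.conj_I, Complex.conj_ofReal,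
    map_intCast, map_natCast, map_ofNat]
  push_cast
  ring

lemma om_pow (n : ℕ) (d : ℤ) (k : ℕ) : om n (d * k) = om n d ^ k := by
  rw [om, om, ← Complex.exp_nat_mul]
  congr 1
  push_cast
  ring

lemma Gsum {n : ℕ} (hn : 1 ≤ n) (d : ℤ) (h1 : -(n:ℤ) < d) (h2 : d < n) :
    ∑ k : Fin n, om n (d * (k : ℕ)) = if d = 0 then (n:ℂ) else 0 := by
  have hn0 : (n:ℂ) ≠ 0 := by
    exact_mod_cast Nat.cast_ne_zero.mpr (by omega)
  rcases eq_or_ne d 0 with rfl | hd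
  · simp [om_zero]
  · rw [if_neg hd]
    have hne : om n d ≠ 1 := by
      intro h
      rw [om, Complex.exp_eq_one_iff] at h
      obtain ⟨m, hm⟩ := h
      have hpi : (Real.pi : ℂ) ≠ 0 := by
        exact_mod_cast Real.pi_ne_zero
      have hI : Complex.I ≠ 0 := Complex.I_ne_zero
      have hdmn : (d : ℂ) = m * n := by
        field_simp at hm
        have h2' : (2 * (Real.pi:ℂ) * Complex.I) * d
            = (2 * (Real.pi:ℂ) * Complex.I) * ((m:ℂ) * n) := by
          linear_combination (2 * (Real.pi:ℂ) * Complex.I) * hm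
        exact mul_left_cancel₀
          (mul_ne_zero (mul_ne_zero two_ne_zero hpi) Complex.I_ne_zero) h2'
      have hdmn' : d = m * n := by exact_mod_cast hdmn
      rcases lt_trichotomy m 0 with hm0 | hm0 | hm0
      · nlinarith [hdmn', h1]
      · rw [hm0, zero_mul] at hdmn'
        exact hd hdmn'
      · nlinarith [hdmn', h2]
    have hroot : om n d ^ n = 1 := by
      rw [← om_pow, om]
      rw [show 2 * (Real.pi:ℂ) * Complex.I * (((d * (n:ℕ) : ℤ)) : ℂ) / n
          = (d:ℂ) * (2 * Real.pi * Complex.I) by push_cast; field_simp]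
      exact_mod_cast Complex.exp_int_mul_two_pi_mul_I d
    have hgeom : ∑ k : Fin n, om n (d * (k:ℕ)) = ∑ k ∈ Finset.range n, om n d ^ k := by
      rw [Fin.sum_univ_eq_sum_range (fun k => om n (d * (k:ℕ)))]
      exact Finset.sum_congr rfl fun k _ => om_pow n d k
    rw [hgeom, geom_sum_eq hne, hroot]
    simp

end dft


section V

variable {n : ℕ}

/-- mixing matrix: DFT/√n on the diagonal positions, identity on off-diagonal positions -/
def Vm (n : ℕ) (p q : Fin n × Fin n) : ℂ :=
  if p.1 = p.2 then
    (if q.1 = q.2 then om n ((p.1 : ℤ) * (q.1 : ℕ)) / (Real.sqrt n : ℂ) else 0)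
  else (if q = p then 1 else 0)

lemma diag_sum (f : Fin n → ℂ) :
    ∑ q : Fin n × Fin n, (if q.1 = q.2 then f q.1 else 0) = ∑ k, f k := by
  rw [Fintype.sum_prod_type]
  refine Finset.sum_congr rfl fun a _ => ?_
  simp

lemma sqrt_n_sq {n : ℕ} (hn : 1 ≤ n) :
    ((Real.sqrt n : ℝ) : ℂ) * ((Real.sqrt n : ℝ) : ℂ) = (n : ℂ) := by
  rw [← Complex.ofReal_mul, Real.mul_self_sqrt (by positivity)]
  simp

lemma sqrt_n_ne_zero {n : ℕ} (hn : 1 ≤ n) : ((Real.sqrt n : ℝ) : ℂ) ≠ 0 := by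
  simp only [ne_eq, Complex.ofReal_eq_zero]
  positivity

lemma Vrow (hn : 1 ≤ n) (p p' : Fin n × Fin n) :
    ∑ q, Vm n p q * conj (Vm n p' q) = if p = p' then 1 else 0 := by
  by_cases hp : p.1 = p.2 <;> by_cases hp' : p'.1 = p'.2
  · -- both diagonal
    have hterm : ∀ q : Fin n × Fin n, Vm n p q * conj (Vm n p' q)
        = if q.1 = q.2 then
            om n (((p.1 : ℤ) - (p'.1 : ℤ)) * (q.1 : ℕ)) / ((n : ℂ)) else 0 := by
      intro q
      rw [Vm, Vm, if_pos hp, if_pos hp']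
      by_cases hq : q.1 = q.2
      · rw [if_pos hq, if_pos hq, if_pos hq]
        rw [map_div₀, om_conj, Complex.conj_ofReal]
        rw [div_mul_div_comm, ← om_add, sqrt_n_sq hn]
        congr 2
        push_cast
        ring
      · rw [if_neg hq, if_neg hq, if_neg hq]
        simp
    rw [Finset.sum_congr rfl fun q _ => hterm q,
      show (∑ q : Fin n × Fin n, if q.1 = q.2 then
          om n (((p.1 : ℤ) - (p'.1 : ℤ)) * (q.1 : ℕ)) / (n : ℂ) else 0)
        = ∑ k : Fin n, om n (((p.1 : ℤ) - (p'.1 : ℤ)) * (k : ℕ)) / (n : ℂ) from diag_sum (fun k => om n (((p.1 : ℤ) - (p'.1 : ℤ)) * (k : ℕ)) / (n : ℂ)),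
      ← Finset.sum_div]
    have hG := Gsum hn ((p.1 : ℤ) - (p'.1 : ℤ))
      (by have := p.1.isLt; have := p'.1.isLt; omega)
      (by have := p.1.isLt; have := p'.1.isLt; omega)
    rw [hG]
    have hiff : ((p.1 : ℤ) - (p'.1 : ℤ) = 0) ↔ (p = p') := by
      constructor
      · intro h
        have h1 : p.1 = p'.1 := by
          have : (p.1 : ℤ) = (p'.1 : ℤ) := by omega
          exact_mod_cast Fin.ext (by exact_mod_cast this)
        exact Prod.ext h1 (by rw [← hp, ← hp', h1])
      · intro h
        rw [h]
        ring
    by_cases h : p = p'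
    · rw [if_pos (hiff.mpr h), if_pos h,
        div_self (by exact_mod_cast Nat.cast_ne_zero.mpr (by omega) : (n:ℂ) ≠ 0)]
    · rw [if_neg (fun hc => h (hiff.mp hc)), if_neg h, zero_div]
  · -- p diagonal, p' off-diagonal
    rw [if_neg (by intro h; exact hp' (h ▸ hp))]
    refine Finset.sum_eq_zero fun q _ => ?_
    rw [Vm, Vm, if_pos hp, if_neg hp']
    by_cases h2 : q = p'
    · rw [if_neg (show ¬q.1 = q.2 from fun hc => hp' (h2 ▸ hc)), zero_mul]
    · rw [if_neg h2]
      simp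
  · -- p off-diagonal, p' diagonal
    rw [if_neg (by intro h; exact hp (h ▸ hp'))]
    refine Finset.sum_eq_zero fun q _ => ?_
    rw [Vm, Vm, if_neg hp, if_pos hp']
    by_cases h1 : q = p
    · rw [if_neg (show ¬q.1 = q.2 from fun hc => hp (h1 ▸ hc))]
      simp
    · rw [if_neg h1, zero_mul]
  · -- both off-diagonal
    have hterm : ∀ q : Fin n × Fin n, Vm n p q * conj (Vm n p' q)
        = if q = p then (if p = p' then 1 else 0) else 0 := by
      intro q
      rw [Vm, Vm, if_neg hp, if_neg hp']
      by_cases h1 : q = p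
      · by_cases h2 : q = p'
        · rw [if_pos h1, if_pos h2, if_pos h1, if_pos (h1.symm.trans h2 : p = p')]
          simp
        · rw [if_pos h1, if_neg h2, if_pos h1,
            if_neg (fun hc => h2 (h1.trans hc))]
          simp
      · rw [if_neg h1, zero_mul, if_neg h1]
    rw [Finset.sum_congr rfl fun q _ => hterm q, Finset.sum_ite_eq' Finset.univ p]
    simp

lemma Vdiagcol (hn : 1 ≤ n) [NeZero n] (q : Fin n × Fin n) :
    ∑ i : Fin n, Vm n (i, i) q
      = if q = (0, 0) then ((n : ℂ) / (Real.sqrt n : ℂ)) else 0 := by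
  have hterm : ∀ i : Fin n, Vm n (i, i) q
      = if q.1 = q.2 then om n ((i : ℤ) * (q.1 : ℕ)) / (Real.sqrt n : ℂ) else 0 :=
    fun i => by rw [Vm, if_pos rfl]
  rw [Finset.sum_congr rfl fun i _ => hterm i]
  by_cases hq : q.1 = q.2
  · simp only [if_pos hq]
    rw [← Finset.sum_div]
    have hcomm : ∀ i : Fin n, om n ((i : ℤ) * (q.1 : ℕ)) = om n (((q.1 : ℕ) : ℤ) * (i : ℕ)) := by
      intro i
      congr 1
      push_cast
      ring
    rw [Finset.sum_congr rfl fun i _ => hcomm i]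
    have hG := Gsum hn ((q.1 : ℕ) : ℤ) (by have := q.1.isLt; omega) (by exact_mod_cast q.1.isLt)
    rw [hG]
    have hiff : (((q.1 : ℕ) : ℤ) = 0) ↔ (q = (0, 0)) := by
      constructor
      · intro h
        have h1 : q.1 = 0 := by
          have : (q.1 : ℕ) = 0 := by exact_mod_cast h
          exact Fin.ext (by simpa using this)
        exact Prod.ext h1 (by rw [← hq, h1])
      · intro h
        rw [h]
        simp
    by_cases h : q = (0, 0)
    · rw [if_pos (hiff.mpr h), if_pos h]
    · rw [if_neg (fun hc => h (hiff.mp hc)), if_neg h, zero_div]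
  · simp only [if_neg hq, Finset.sum_const_zero]
    rw [if_neg (by intro h; exact hq (by rw [h]))]

end V


section main

variable {n : ℕ}

def Ffun (n : ℕ) (t : (Fin n × Fin n) → Bool) (p : Fin n × Fin n) : ℂ :=
  ∑ q, Vm n p q * (sg (t q) : ℂ)

def phi (n : ℕ) (t : (Fin n × Fin n) → Bool) : Matrix (Fin n) (Fin n) ℂ :=
  Matrix.of fun i j => (((Real.sqrt n : ℝ)) : ℂ)⁻¹ * Ffun n t (i, j)

lemma rescale (hn : 1 ≤ n) (t : (Fin n × Fin n) → Bool) (i j : Fin n) :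
    ((Real.sqrt n : ℝ) : ℂ) * phi n t i j = Ffun n t (i, j) := by
  rw [phi, Matrix.of_apply, ← mul_assoc, mul_inv_cancel₀ (sqrt_n_ne_zero hn), one_mul]

lemma re_mul_conj (z : ℂ) : (z * conj z).re = ‖z‖ ^ 2 := by
  rw [Complex.mul_conj, Complex.ofReal_re, Complex.normSq_eq_norm_sq]

lemma trace_one_mul_phi (hn : 1 ≤ n) [NeZero n] (t : (Fin n × Fin n) → Bool) :
    Matrix.trace ((1 : Matrix (Fin n) (Fin n) ℂ) * phi n t) = ((sg (t (0, 0)) : ℝ) : ℂ) := by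
  rw [one_mul, Matrix.trace]
  have hdiag : ∀ i : Fin n, (phi n t).diag i = (((Real.sqrt n : ℝ)) : ℂ)⁻¹ * Ffun n t (i, i) :=
    fun i => rfl
  rw [Finset.sum_congr rfl fun i _ => hdiag i, ← Finset.mul_sum]
  have h1 : ∑ i : Fin n, Ffun n t (i, i)
      = ∑ q : Fin n × Fin n, (∑ i : Fin n, Vm n (i, i) q) * (sg (t q) : ℂ) := by
    calc ∑ i : Fin n, Ffun n t (i, i)
        = ∑ i : Fin n, ∑ q, Vm n (i, i) q * (sg (t q) : ℂ) :=
          Finset.sum_congr rfl fun i _ => rfl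
      _ = ∑ q, ∑ i : Fin n, Vm n (i, i) q * (sg (t q) : ℂ) := Finset.sum_comm
      _ = ∑ q, (∑ i : Fin n, Vm n (i, i) q) * (sg (t q) : ℂ) :=
          Finset.sum_congr rfl fun q _ => (Finset.sum_mul _ _ _).symm
  rw [h1, Finset.sum_congr rfl fun q _ => by rw [Vdiagcol hn q]]
  rw [Finset.sum_eq_single ((0 : Fin n), (0 : Fin n))]
  · rw [if_pos rfl]
    rw [show ((n : ℂ) / ((Real.sqrt n : ℝ) : ℂ)) = ((Real.sqrt n : ℝ) : ℂ) by
      rw [eq_comm, eq_div_iff (sqrt_n_ne_zero hn), sqrt_n_sq hn]]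
    rw [← mul_assoc, inv_mul_cancel₀ (sqrt_n_ne_zero hn), one_mul]
  · intro q _ hq
    rw [if_neg hq, zero_mul]
  · intro h
    exact absurd (Finset.mem_univ _) h

lemma sum_x_Ffun (x : (Fin n × Fin n) → ℂ) (t : (Fin n × Fin n) → Bool) :
    ∑ p, x p * Ffun n t p = ∑ q, (∑ p, x p * Vm n p q) * (sg (t q) : ℂ) := by
  calc ∑ p, x p * Ffun n t p
      = ∑ p, ∑ q, x p * Vm n p q * (sg (t q) : ℂ) := by
        refine Finset.sum_congr rfl fun p _ => ?_
        rw [Ffun, Finset.mul_sum]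
        exact Finset.sum_congr rfl fun q _ => by ring
    _ = ∑ q, ∑ p, x p * Vm n p q * (sg (t q) : ℂ) := Finset.sum_comm
    _ = ∑ q, (∑ p, x p * Vm n p q) * (sg (t q) : ℂ) := by
        exact Finset.sum_congr rfl fun q _ => by rw [Finset.sum_mul]

lemma y_norm (hn : 1 ≤ n) (x : (Fin n × Fin n) → ℂ) :
    ∑ q, ‖∑ p, x p * Vm n p q‖ ^ 2 = ∑ p, ‖x p‖ ^ 2 := by
  have hyy : ∑ q, (∑ p, x p * Vm n p q) * conj (∑ p, x p * Vm n p q)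
      = ∑ p, x p * conj (x p) := by
    calc ∑ q, (∑ p, x p * Vm n p q) * conj (∑ p, x p * Vm n p q)
        = ∑ q, ∑ p, ∑ p', (x p * conj (x p')) * (Vm n p q * conj (Vm n p' q)) := by
          refine Finset.sum_congr rfl fun q _ => ?_
          rw [map_sum, Finset.sum_mul_sum]
          refine Finset.sum_congr rfl fun p _ => Finset.sum_congr rfl fun p' _ => ?_
          rw [_root_.map_mul]
          ring
      _ = ∑ p, ∑ p', (x p * conj (x p')) * ∑ q, Vm n p q * conj (Vm n p' q) := by
          rw [Finset.sum_comm]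
          refine Finset.sum_congr rfl fun p _ => ?_
          rw [Finset.sum_comm]
          exact Finset.sum_congr rfl fun p' _ => by rw [← Finset.mul_sum]
      _ = ∑ p, x p * conj (x p) := by
          refine Finset.sum_congr rfl fun p _ => ?_
          rw [Finset.sum_congr rfl fun p' (_ : p' ∈ Finset.univ) => by rw [Vrow hn p p']]
          rw [Finset.sum_eq_single p]
          · rw [if_pos rfl, mul_one]
          · intro p' _ hp'
            rw [if_neg (Ne.symm hp'), mul_zero]
          · intro h
            exact absurd (Finset.mem_univ _) h
  have h1 := congrArg Complex.re hyy
  rw [Complex.re_sum, Complex.re_sum] at h1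
  calc ∑ q, ‖∑ p, x p * Vm n p q‖ ^ 2
      = ∑ q, ((∑ p, x p * Vm n p q) * conj (∑ p, x p * Vm n p q)).re :=
        Finset.sum_congr rfl fun q _ => (re_mul_conj _).symm
    _ = ∑ p, (x p * conj (x p)).re := h1
    _ = ∑ p, ‖x p‖ ^ 2 := Finset.sum_congr rfl fun p _ => re_mul_conj _

end main

end MatrixSidonAux


open MatrixSidonAux

/-- For every `ε > 0` there are constants `β, c_ε > 0` (independent of `n`)
such that for every `n ≥ 1` there exist a probability space `(T, m)`, a matrix-valued
`φ : T → M_n` whose `n²` rescaled entries `{√n φ(·)_{ij}}` are orthonormal in `L²(T, m)` and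
`β`-subgaussian, and a matrix `a ∈ M_n` with `tr|a| ≥ n (1+ε)⁻¹` while
`ess sup_t |tr (a φ(t))| ≤ c_ε`. Consequently any constant `C'` with
`tr|b| ≤ C' sup_t |tr (b φ(t))|` for all `b ∈ M_n` satisfies `C' ≥ n (1+ε)⁻¹ c_ε⁻¹`, so the
trivial bound `C'_n ≤ n` is asymptotically optimal. -/
theorem matrix_sidon_lower_bound (ε : ℝ) (hε : 0 < ε) :
    ∃ β c : ℝ, 0 < β ∧ 0 < c ∧
    ∀ n : ℕ, 1 ≤ n →
    ∃ (T : Type) (_ : MeasurableSpace T) (m : Measure T)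
      (φ : T → Matrix (Fin n) (Fin n) ℂ) (a : Matrix (Fin n) (Fin n) ℂ),
      IsProbabilityMeasure m ∧
      (∀ i j, Measurable fun t => φ t i j) ∧
      -- the rescaled entries are orthonormal in `L²(T, m)`
      (∀ i j i' j' : Fin n,
        ∫ t, ((Real.sqrt n : ℂ) * φ t i j) * conj ((Real.sqrt n : ℂ) * φ t i' j') ∂m
          = if i = i' ∧ j = j' then 1 else 0) ∧
      -- the rescaled entries are `β`-subgaussian
      (∀ x : Fin n × Fin n → ℂ, (∑ p, ‖x p‖ ^ 2) ≤ 1 →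
        ∫ t, Real.exp
            (‖∑ p : Fin n × Fin n, x p * ((Real.sqrt n : ℂ) * φ t p.1 p.2)‖ ^ 2 / β ^ 2) ∂m
          ≤ Real.exp 1) ∧
      -- `tr|a| ≥ n (1+ε)⁻¹`
      (n : ℝ) * (1 + ε)⁻¹ ≤ (Matrix.posSemidef_conjTranspose_mul_self a).sqrt.trace.re ∧
      -- `ess sup_t |tr (a φ(t))| ≤ c`
      eLpNorm (fun t => Matrix.trace (a * φ t)) ⊤ m ≤ ENNReal.ofReal c ∧
      -- consequently: any "matrix Sidon" constant `C'` for `φ` is at least `n (1+ε)⁻¹ c⁻¹`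
      (∀ C' : ℝ,
        (∀ b : Matrix (Fin n) (Fin n) ℂ,
          ENNReal.ofReal ((Matrix.posSemidef_conjTranspose_mul_self b).sqrt.trace.re)
            ≤ ENNReal.ofReal C' * eLpNorm (fun t => Matrix.trace (b * φ t)) ⊤ m) →
        (n : ℝ) * (1 + ε)⁻¹ * c⁻¹ ≤ C') := by
  classical
  refine ⟨4, 1, by norm_num, one_pos, ?_⟩
  intro n hn
  haveI : NeZero n := ⟨by omega⟩
  letI : MeasurableSpace ((Fin n × Fin n) → Bool) := ⊤
  haveI : MeasurableSingletonClass ((Fin n × Fin n) → Bool) :=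
    ⟨fun _ => MeasurableSpace.measurableSet_top⟩
  -- the square root of `1ᴴ * 1`
  have hsq1 : (1 : Matrix (Fin n) (Fin n) ℂ)
      = (Matrix.posSemidef_conjTranspose_mul_self
          (1 : Matrix (Fin n) (Fin n) ℂ)).sqrt :=
    by
      have := (Matrix.posSemidef_conjTranspose_mul_self (1 : Matrix (Fin n) (Fin n) ℂ)).1.cfc_eq Real.sqrt
      rw [Matrix.IsHermitian.cfc, Unitary.conjStarAlgAut_apply] at this
      rw [Matrix.PosSemidef.sqrt, ← this]
      simp only [conjTranspose_one, mul_one]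
      rw [← map_one (algebraMap ℝ (Matrix (Fin n) (Fin n) ℂ)), cfc_algebraMap]
      simp
  have htrre : (Matrix.posSemidef_conjTranspose_mul_self
      (1 : Matrix (Fin n) (Fin n) ℂ)).sqrt.trace.re = (n : ℝ) := by
    rw [← hsq1, Matrix.trace_one]
    simp
  -- trace of `1 * phi n t` is a sign
  have htr : ∀ t : (Fin n × Fin n) → Bool, Matrix.trace ((1 : Matrix (Fin n) (Fin n) ℂ) * phi n t)
      = ((sg (t (0, 0)) : ℝ) : ℂ) := trace_one_mul_phi hn
  have heL : eLpNorm (fun t => Matrix.trace ((1 : Matrix (Fin n) (Fin n) ℂ) * phi n t)) ⊤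
      (unif ((Fin n × Fin n) → Bool)) ≤ ENNReal.ofReal 1 := by
    rw [eLpNorm_exponent_top]
    refine eLpNormEssSup_le_of_ae_bound (MeasureTheory.ae_of_all _ fun t => ?_)
    rw [htr t, norm_sg]
  have hmono : (n : ℝ) * (1 + ε)⁻¹ ≤ (n : ℝ) := by
    have h1 : (1 + ε)⁻¹ ≤ 1 := by
      rw [inv_le_one_iff₀]
      right
      linarith
    have h2 : (0:ℝ) ≤ (n:ℝ) := by positivity
    nlinarith
  refine ⟨(Fin n × Fin n) → Bool, inferInstance, unif ((Fin n × Fin n) → Bool), phi n, 1,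
    unif_prob _, ?_, ?_, ?_, ?_, ?_, ?_⟩
  · intro i j
    exact measurable_from_top
  · -- orthonormality
    intro i j i' j'
    calc ∫ t, ((Real.sqrt n : ℂ) * phi n t i j) * conj ((Real.sqrt n : ℂ) * phi n t i' j')
          ∂(unif ((Fin n × Fin n) → Bool))
        = ∫ t, Ffun n t (i, j) * conj (Ffun n t (i', j')) ∂(unif ((Fin n × Fin n) → Bool)) := by
          refine MeasureTheory.integral_congr_ae (MeasureTheory.ae_of_all _ fun t => ?_)
          show ((Real.sqrt n : ℂ) * phi n t i j) * conj ((Real.sqrt n : ℂ) * phi n t i' j')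
            = Ffun n t (i, j) * conj (Ffun n t (i', j'))
          rw [rescale hn, rescale hn]
      _ = (Fintype.card ((Fin n × Fin n) → Bool) : ℝ)⁻¹
            • ∑ t : (Fin n × Fin n) → Bool, Ffun n t (i, j) * conj (Ffun n t (i', j')) :=
          unif_integral _ _
      _ = ∑ q, Vm n (i, j) q * conj (Vm n (i', j') q) := sum_orth_pair _ _
      _ = if (i, j) = (i', j') then 1 else 0 := Vrow hn _ _
      _ = if i = i' ∧ j = j' then 1 else 0 := by
          simp [Prod.ext_iff]
  · -- subgaussianity, β = 4
    intro x hx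
    have hy : ∑ q, ‖∑ p, x p * Vm n p q‖ ^ 2 ≤ 1 := by
      rw [y_norm hn x]
      exact hx
    have hrw : ∀ t : (Fin n × Fin n) → Bool,
        ‖∑ p : Fin n × Fin n, x p * ((Real.sqrt n : ℂ) * phi n t p.1 p.2)‖ ^ 2
          / (4:ℝ) ^ 2
        = ‖∑ q, (∑ p, x p * Vm n p q) * (sg (t q) : ℂ)‖ ^ 2 / 16 := by
      intro t
      have h1 : ∑ p : Fin n × Fin n, x p * ((Real.sqrt n : ℂ) * phi n t p.1 p.2)
          = ∑ q, (∑ p, x p * Vm n p q) * (sg (t q) : ℂ) := by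
        rw [← sum_x_Ffun x t]
        exact Finset.sum_congr rfl fun p _ => by rw [rescale hn]
      rw [h1]
      norm_num
    calc ∫ t, Real.exp
          (‖∑ p : Fin n × Fin n, x p * ((Real.sqrt n : ℂ) * phi n t p.1 p.2)‖ ^ 2 / (4:ℝ) ^ 2)
          ∂(unif ((Fin n × Fin n) → Bool))
        = ∫ t, Real.exp
            (‖∑ q, (∑ p, x p * Vm n p q) * (sg (t q) : ℂ)‖ ^ 2 / 16)
            ∂(unif ((Fin n × Fin n) → Bool)) := by
          refine MeasureTheory.integral_congr_ae (MeasureTheory.ae_of_all _ fun t => ?_)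
          show Real.exp
              (‖∑ p : Fin n × Fin n, x p * ((Real.sqrt n : ℂ) * phi n t p.1 p.2)‖ ^ 2 / (4:ℝ) ^ 2)
            = Real.exp (‖∑ q, (∑ p, x p * Vm n p q) * (sg (t q) : ℂ)‖ ^ 2 / 16)
          rw [hrw t]
      _ = (Fintype.card ((Fin n × Fin n) → Bool) : ℝ)⁻¹
            • ∑ t : (Fin n × Fin n) → Bool,
              Real.exp (‖∑ q, (∑ p, x p * Vm n p q) * (sg (t q) : ℂ)‖ ^ 2 / 16) :=
          unif_integral _ _
      _ ≤ 2 / Real.sqrt 3 := by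
          rw [smul_eq_mul]
          exact key_complex _ hy
      _ ≤ Real.exp 1 := two_div_sqrt_three_le_exp_one
  · -- trace lower bound
    rw [htrre]
    exact hmono
  · -- essential supremum bound
    exact heL
  · -- the consequence
    intro C' hC'
    have h1 := hC' 1
    rw [htrre] at h1
    have h3 : ENNReal.ofReal (n : ℝ) ≤ ENNReal.ofReal C' := by
      calc ENNReal.ofReal (n : ℝ)
          ≤ ENNReal.ofReal C'
            * eLpNorm (fun t => Matrix.trace ((1 : Matrix (Fin n) (Fin n) ℂ) * phi n t)) ⊤
              (unif ((Fin n × Fin n) → Bool)) :=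
            h1
        _ ≤ ENNReal.ofReal C' * ENNReal.ofReal 1 := mul_le_mul_right heL _
        _ = ENNReal.ofReal C' := by rw [ENNReal.ofReal_one, mul_one]
    have h4 : (n : ℝ) ≤ C' := by
      rcases le_or_gt 0 C' with hc0 | hc0
      · exact (ENNReal.ofReal_le_ofReal_iff hc0).mp h3
      · exfalso
        rw [ENNReal.ofReal_eq_zero.mpr hc0.le] at h3
        have := ENNReal.ofReal_eq_zero.mp (le_antisymm h3 (zero_le))
        have hn1 : (1:ℝ) ≤ (n:ℝ) := by exact_mod_cast hn
        linarith
    rw [inv_one, mul_one]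
    linarith
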